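/- For a closed Markov process with equilibrium q (Hq = 0, all q_i > 0) and a positive solution p(t) of the master equation, the relative entropy I(p(t), q) = ∑_i p_i ln(p_i/q_i) is non-increasing in time: dI/dt = ∑_{i,j} H_{ij} p_j (ln(p_i/q_i) − p_i q_j/(q_i p_j)) ≤ 0. -/

import Mathlib

/-- For a closed Markov process with positive equilibrium `q` and a positive
solution `p t` of the master equation, the relative entropy `I(p(t), q)` has
time derivative `∑ᵢⱼ H i j * p j * (ln(pᵢ/qᵢ) - pᵢqⱼ/(qᵢpⱼ))`, which is
nonpositive. -/
theorem relative_entropy_nonincreasing_closed {V : Type*} [Fintype V]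
    (H : V → V → ℝ)
    (hoff : ∀ i j, i ≠ j → 0 ≤ H i j)
    (hsum : ∀ j, ∑ i, H i j = 0)
    (q : V → ℝ) (hq : ∀ i, 0 < q i)
    (heq : ∀ i, ∑ j, H i j * q j = 0)
    (p : ℝ → V → ℝ) (hp : ∀ t i, 0 < p t i)
    (hmaster : ∀ t i, HasDerivAt (fun s => p s i) (∑ j, H i j * p t j) t)
    (t : ℝ) :
    HasDerivAt (fun s => ∑ i, p s i * Real.log (p s i / q i))
      (∑ i, ∑ j, H i j * p t j *
        (Real.log (p t i / q i) - p t i * q j / (q i * p t j))) t ∧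
    ∑ i, ∑ j, H i j * p t j *
        (Real.log (p t i / q i) - p t i * q j / (q i * p t j)) ≤ 0 := by
  have hqne : ∀ i, q i ≠ 0 := fun i => (hq i).ne'
  have hpne : ∀ s i, p s i ≠ 0 := fun s i => (hp s i).ne'
  set D : V → ℝ := fun i => ∑ j, H i j * p t j with hD
  -- sum of the D i is zero
  have hDsum : ∑ i, D i = 0 := by
    simp only [hD]
    rw [Finset.sum_comm]
    simp [← Finset.sum_mul, hsum]
  -- each inner sum collapses using heq
  have hterm : ∀ i, (∑ j, H i j * p t j *
      (Real.log (p t i / q i) - p t i * q j / (q i * p t j)))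
      = D i * Real.log (p t i / q i) := by
    intro i
    have key : ∀ j, H i j * p t j *
        (Real.log (p t i / q i) - p t i * q j / (q i * p t j))
        = H i j * p t j * Real.log (p t i / q i) - (p t i / q i) * (H i j * q j) := by
      intro j
      have h2 : H i j * p t j * (p t i * q j / (q i * p t j)) = (p t i / q i) * (H i j * q j) := by
        field_simp [hpne t j, hqne i]
      rw [mul_sub, h2]
    rw [Finset.sum_congr rfl (fun j _ => key j), Finset.sum_sub_distrib,
      ← Finset.mul_sum, heq i, mul_zero, sub_zero, ← Finset.sum_mul]
  have hderiv : HasDerivAt (fun s => ∑ i, p s i * Real.log (p s i / q i))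
      (∑ i, (D i * Real.log (p t i / q i) + D i)) t := by
    apply HasDerivAt.fun_sum
    intro i _
    have h1 : HasDerivAt (fun s => p s i) (D i) t := hmaster t i
    have h2 : HasDerivAt (fun s => p s i / q i) (D i / q i) t := h1.div_const _
    have h3 : HasDerivAt (fun s => Real.log (p s i / q i))
        ((D i / q i) / (p t i / q i)) t := h2.log (div_ne_zero (hpne t i) (hqne i))
    have h4 := h1.fun_mul h3
    have e : p t i * (D i / q i / (p t i / q i)) = D i := by field_simp [hpne t i, hqne i]
    rw [e] at h4
    exact h4
  constructor
  · have : (∑ i, ∑ j, H i j * p t j *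
        (Real.log (p t i / q i) - p t i * q j / (q i * p t j)))
        = ∑ i, (D i * Real.log (p t i / q i) + D i) := by
      rw [Finset.sum_congr rfl (fun i _ => hterm i), Finset.sum_add_distrib, hDsum,
        add_zero]
    rw [this]
    exact hderiv
  · -- nonpositivity
    have hrewrite : (∑ i, ∑ j, H i j * p t j *
        (Real.log (p t i / q i) - p t i * q j / (q i * p t j)))
        = ∑ i, ∑ j, H i j * p t j *
          (Real.log (p t i / q i) - Real.log (p t j / q j) + 1
            - p t i * q j / (q i * p t j)) := by
      have zero1 : (∑ i, ∑ j, H i j * (p t j * (Real.log (p t j / q j) - 1))) = 0 := by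
        rw [Finset.sum_comm]
        simp [← Finset.sum_mul, hsum]
      have expand : ∀ i j, H i j * p t j *
          (Real.log (p t i / q i) - Real.log (p t j / q j) + 1
            - p t i * q j / (q i * p t j))
          = H i j * p t j * (Real.log (p t i / q i) - p t i * q j / (q i * p t j))
            - H i j * (p t j * (Real.log (p t j / q j) - 1)) := by
        intro i j; ring
      rw [Finset.sum_congr rfl (fun i _ => Finset.sum_congr rfl (fun j _ => expand i j))]
      rw [Finset.sum_congr rfl (fun i _ => Finset.sum_sub_distrib _ _),
        Finset.sum_sub_distrib, zero1, sub_zero]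
    rw [hrewrite]
    apply Finset.sum_nonpos
    intro i _
    apply Finset.sum_nonpos
    intro j _
    rcases eq_or_ne i j with rfl | hij
    · have h0 : p t i * q i / (q i * p t i) = 1 := by
        rw [mul_comm (p t i) (q i)]
        exact div_self (mul_pos (hq i) (hp t i)).ne'
      rw [h0]
      simp
    · apply mul_nonpos_of_nonneg_of_nonpos
      · exact mul_nonneg (hoff i j hij) (hp t j).le
      · set x := p t i * q j / (q i * p t j) with hx
        have hxpos : 0 < x := by
          apply div_pos (mul_pos (hp t i) (hq j)) (mul_pos (hq i) (hp t j))
        have hlog : Real.log (p t i / q i) - Real.log (p t j / q j) = Real.log x := by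
          rw [hx]
          have : p t i * q j / (q i * p t j) = (p t i / q i) / (p t j / q j) := by
            field_simp
          rw [this, Real.log_div (div_ne_zero (hpne t i) (hqne i))
            (div_ne_zero (hpne t j) (hqne j))]
        rw [hlog]
        have := Real.log_le_sub_one_of_pos hxpos
        linarith
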